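/- Fix ε, a ∈ ℂ and x > 0. Let u, E, p, q : (0,∞) → ℂ be differentiable at x with u(x) ≠ 0 and E(x) ≠ 0. Define the 2×2 complex matrices σ₃ = diag(1,−1), J(x) = (εx/(4u(x)))·[[0, p(x)],[q(x), 0]], K(x) = (u(x)/x)·[[ε, E(x)],[−1/E(x), −ε]], and for λ ∈ ℂ, λ ≠ 0, Λ(λ,x) = −ixσ₃ − (ia/(2λ))σ₃ − (x/λ)J(x) + (ix/(2λ²))K(x) and X(λ,x) = −iλσ₃ + (ia/(2x))σ₃ − J(x) − (i/(2λ))K(x). Then the zero-curvature identity ∂Λ/∂x(λ,x) − ∂X/∂λ(λ,x) + Λ(λ,x)X(λ,x) − X(λ,x)Λ(λ,x) = 0 holds for every λ ≠ 0 if and only if all five equations of the D7 compatibility system with parameters (ε, a) hold at x. -/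

import Mathlib

open Matrix

set_option maxHeartbeats 4000000

/-- The five equations of the D7 compatibility system with parameters `(ε, a)`
at `x` (equations (7)–(11) of the Painlevé-III (D7) Lax pair, written with
`E = e^{iφ}`). -/
def D7System (ε a : ℂ) (u E p q : ℝ → ℂ) (x : ℝ) : Prop :=
  (deriv u x - u x / (x : ℂ) - ((x : ℂ) / 2) * (p x / E x + q x * E x) = 0) ∧
  (-(ε * (x : ℂ) ^ 2 * deriv p x) / (4 * u x)
      + ε * (x : ℂ) ^ 2 * p x * deriv u x / (4 * (u x) ^ 2)
      - ε * (x : ℂ) * p x / (2 * u x)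
      + Complex.I * ε * a * (x : ℂ) * p x / (2 * u x)
      - 2 * u x * E x = 0) ∧
  ((Complex.I / 2) * u x * deriv E x + (Complex.I / 2) * deriv u x * E x
      - (Complex.I / (2 * (x : ℂ))) * u x * E x
      - (Complex.I * ε ^ 2 / 2) * (x : ℂ) * p x = 0) ∧
  (-(ε * (x : ℂ) ^ 2 * deriv q x) / (4 * u x)
      + ε * (x : ℂ) ^ 2 * q x * deriv u x / (4 * (u x) ^ 2)
      - ε * (x : ℂ) * q x / (2 * u x)
      - Complex.I * ε * a * (x : ℂ) * q x / (2 * u x)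
      - 2 * u x / E x = 0) ∧
  ((Complex.I / 2) * u x * deriv E x / (E x) ^ 2
      - (Complex.I / 2) * deriv u x / E x
      + (Complex.I / (2 * (x : ℂ))) * u x / E x
      + (Complex.I * ε ^ 2 / 2) * (x : ℂ) * q x = 0)

/-- The Pauli matrix `σ₃`. -/
def sigma3 : Matrix (Fin 2) (Fin 2) ℂ := !![1, 0; 0, -1]

/-- The matrix `J(x) = (εx/(4u(x))) · [[0, p(x)], [q(x), 0]]`. -/
noncomputable def Jmat (ε : ℂ) (u p q : ℝ → ℂ) (x : ℝ) : Matrix (Fin 2) (Fin 2) ℂ :=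
  (ε * (x : ℂ) / (4 * u x)) • !![0, p x; q x, 0]

/-- The matrix `K(x) = (u(x)/x) · [[ε, E(x)], [−1/E(x), −ε]]`. -/
noncomputable def Kmat (ε : ℂ) (u E : ℝ → ℂ) (x : ℝ) : Matrix (Fin 2) (Fin 2) ℂ :=
  (u x / (x : ℂ)) • !![ε, E x; -(E x)⁻¹, -ε]

/-- The coefficient matrix `Λ(λ,x)` of the λ-equation of the Lax pair. -/
noncomputable def LambdaMat (ε a : ℂ) (u E p q : ℝ → ℂ) (lam : ℂ) (x : ℝ) :
    Matrix (Fin 2) (Fin 2) ℂ :=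
  (-Complex.I * (x : ℂ)) • sigma3 - (Complex.I * a / (2 * lam)) • sigma3
    - ((x : ℂ) / lam) • Jmat ε u p q x
    + (Complex.I * (x : ℂ) / (2 * lam ^ 2)) • Kmat ε u E x

/-- The coefficient matrix `X(λ,x)` of the x-equation of the Lax pair. -/
noncomputable def Xmat (ε a : ℂ) (u E p q : ℝ → ℂ) (lam : ℂ) (x : ℝ) :
    Matrix (Fin 2) (Fin 2) ℂ :=
  (-Complex.I * lam) • sigma3 + (Complex.I * a / (2 * (x : ℂ))) • sigma3
    - Jmat ε u p q x - (Complex.I / (2 * lam)) • Kmat ε u E x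

/-- The zero-curvature identity `Λ_x − X_λ + [Λ, X] = 0` holds for every `λ ≠ 0`
if and only if the five equations of the D7 compatibility system with parameters
`(ε, a)` hold at `x`. -/
theorem stmt_3 (ε a : ℂ) (x : ℝ) (hx : 0 < x) (u E p q : ℝ → ℂ)
    (hu : DifferentiableAt ℝ u x) (hE : DifferentiableAt ℝ E x)
    (hp : DifferentiableAt ℝ p x) (hq : DifferentiableAt ℝ q x)
    (hux : u x ≠ 0) (hEx : E x ≠ 0) :
    (∀ lam : ℂ, lam ≠ 0 →
      (Matrix.of fun i j => deriv (fun t : ℝ => LambdaMat ε a u E p q lam t i j) x)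
        - (Matrix.of fun i j => deriv (fun l : ℂ => Xmat ε a u E p q l x i j) lam)
        + LambdaMat ε a u E p q lam x * Xmat ε a u E p q lam x
        - Xmat ε a u E p q lam x * LambdaMat ε a u E p q lam x = 0)
      ↔ D7System ε a u E p q x := by
  have hxR : x ≠ 0 := ne_of_gt hx
  have hx0 : (x : ℂ) ≠ 0 := Complex.ofReal_ne_zero.mpr hxR
  have hu' := hu.hasDerivAt
  have hE' := hE.hasDerivAt
  have hp' := hp.hasDerivAt
  have hq' := hq.hasDerivAt
  have htC : HasDerivAt (fun t : ℝ => (t : ℂ)) 1 x := Complex.ofRealCLM.hasDerivAt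
  have ht2 : HasDerivAt (fun t : ℝ => ((t : ℂ)) ^ 2) (2 * (x : ℂ)) x := by
    have h := htC.mul htC
    simp only [pow_two]
    exact h.congr_deriv (by ring)
  -- derivatives of the entries of Λ with respect to x
  have d00 : ∀ lam : ℂ, lam ≠ 0 → deriv (fun t : ℝ => LambdaMat ε a u E p q lam t 0 0) x
      = -Complex.I + Complex.I * ε * deriv u x / (2 * lam ^ 2) := by
    intro lam hl
    have hev : (fun t : ℝ => LambdaMat ε a u E p q lam t 0 0) =ᶠ[nhds x]
        (fun t : ℝ => -Complex.I * (t : ℂ) - Complex.I * a / (2 * lam)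
          + Complex.I * ε / (2 * lam ^ 2) * u t) := by
      filter_upwards [eventually_ne_nhds hxR] with t ht
      have ht' : (t : ℂ) ≠ 0 := Complex.ofReal_ne_zero.mpr ht
      simp only [LambdaMat, Jmat, Kmat, sigma3, Matrix.sub_apply, Matrix.add_apply,
        Matrix.smul_apply, smul_eq_mul, Matrix.of_apply, Matrix.cons_val', Matrix.cons_val_zero,
        Matrix.cons_val_one, Matrix.head_cons, Matrix.head_fin_const, Matrix.empty_val',
        Matrix.cons_val_fin_one]
      linear_combination (Complex.I * ε / (2 * lam ^ 2) * u t) * (mul_inv_cancel₀ ht')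
    rw [hev.deriv_eq]
    exact ((((htC.const_mul (-Complex.I)).sub_const (Complex.I * a / (2 * lam))).add
      (hu'.const_mul (Complex.I * ε / (2 * lam ^ 2)))).deriv).trans (by ring)
  have d11 : ∀ lam : ℂ, lam ≠ 0 → deriv (fun t : ℝ => LambdaMat ε a u E p q lam t 1 1) x
      = Complex.I - Complex.I * ε * deriv u x / (2 * lam ^ 2) := by
    intro lam hl
    have hev : (fun t : ℝ => LambdaMat ε a u E p q lam t 1 1) =ᶠ[nhds x]
        (fun t : ℝ => Complex.I * (t : ℂ) + Complex.I * a / (2 * lam)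
          + -(Complex.I * ε / (2 * lam ^ 2)) * u t) := by
      filter_upwards [eventually_ne_nhds hxR] with t ht
      have ht' : (t : ℂ) ≠ 0 := Complex.ofReal_ne_zero.mpr ht
      simp only [LambdaMat, Jmat, Kmat, sigma3, Matrix.sub_apply, Matrix.add_apply,
        Matrix.smul_apply, smul_eq_mul, Matrix.of_apply, Matrix.cons_val', Matrix.cons_val_zero,
        Matrix.cons_val_one, Matrix.head_cons, Matrix.head_fin_const, Matrix.empty_val',
        Matrix.cons_val_fin_one]
      linear_combination (-(Complex.I * ε / (2 * lam ^ 2)) * u t) * (mul_inv_cancel₀ ht')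
    rw [hev.deriv_eq]
    exact ((((htC.const_mul Complex.I).add_const (Complex.I * a / (2 * lam))).add
      (hu'.const_mul (-(Complex.I * ε / (2 * lam ^ 2))))).deriv).trans (by ring)
  have d01 : ∀ lam : ℂ, lam ≠ 0 → deriv (fun t : ℝ => LambdaMat ε a u E p q lam t 0 1) x
      = -(ε / (4 * lam)) * (((2 * (x : ℂ) * p x + (x : ℂ) ^ 2 * deriv p x) * u x
          - (x : ℂ) ^ 2 * p x * deriv u x) / u x ^ 2)
        + Complex.I / (2 * lam ^ 2) * (deriv u x * E x + u x * deriv E x) := by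
    intro lam hl
    have hev : (fun t : ℝ => LambdaMat ε a u E p q lam t 0 1) =ᶠ[nhds x]
        (fun t : ℝ => -(ε / (4 * lam)) * ((t : ℂ) ^ 2 * p t / u t)
          + Complex.I / (2 * lam ^ 2) * (u t * E t)) := by
      filter_upwards [eventually_ne_nhds hxR] with t ht
      have ht' : (t : ℂ) ≠ 0 := Complex.ofReal_ne_zero.mpr ht
      simp only [LambdaMat, Jmat, Kmat, sigma3, Matrix.sub_apply, Matrix.add_apply,
        Matrix.smul_apply, smul_eq_mul, Matrix.of_apply, Matrix.cons_val', Matrix.cons_val_zero,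
        Matrix.cons_val_one, Matrix.head_cons, Matrix.head_fin_const, Matrix.empty_val',
        Matrix.cons_val_fin_one]
      linear_combination (Complex.I / (2 * lam ^ 2) * (u t * E t)) * (mul_inv_cancel₀ ht')
    rw [hev.deriv_eq]
    exact (((((ht2.mul hp').div hu' hux).const_mul (-(ε / (4 * lam)))).add
      ((hu'.mul hE').const_mul (Complex.I / (2 * lam ^ 2)))).deriv).trans (by simp only [Pi.mul_apply])
  have d10 : ∀ lam : ℂ, lam ≠ 0 → deriv (fun t : ℝ => LambdaMat ε a u E p q lam t 1 0) x
      = -(ε / (4 * lam)) * (((2 * (x : ℂ) * q x + (x : ℂ) ^ 2 * deriv q x) * u x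
          - (x : ℂ) ^ 2 * q x * deriv u x) / u x ^ 2)
        + -(Complex.I / (2 * lam ^ 2)) * ((deriv u x * E x - u x * deriv E x) / E x ^ 2) := by
    intro lam hl
    have hev : (fun t : ℝ => LambdaMat ε a u E p q lam t 1 0) =ᶠ[nhds x]
        (fun t : ℝ => -(ε / (4 * lam)) * ((t : ℂ) ^ 2 * q t / u t)
          + -(Complex.I / (2 * lam ^ 2)) * (u t / E t)) := by
      filter_upwards [eventually_ne_nhds hxR] with t ht
      have ht' : (t : ℂ) ≠ 0 := Complex.ofReal_ne_zero.mpr ht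
      simp only [LambdaMat, Jmat, Kmat, sigma3, Matrix.sub_apply, Matrix.add_apply,
        Matrix.smul_apply, smul_eq_mul, Matrix.of_apply, Matrix.cons_val', Matrix.cons_val_zero,
        Matrix.cons_val_one, Matrix.head_cons, Matrix.head_fin_const, Matrix.empty_val',
        Matrix.cons_val_fin_one]
      linear_combination (-(Complex.I / (2 * lam ^ 2)) * (u t * (E t)⁻¹)) * (mul_inv_cancel₀ ht')
    rw [hev.deriv_eq]
    exact (((((ht2.mul hq').div hu' hux).const_mul (-(ε / (4 * lam)))).add
      ((hu'.div hE' hEx).const_mul (-(Complex.I / (2 * lam ^ 2))))).deriv).trans (by simp only [Pi.mul_apply])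
  -- derivatives of the entries of X with respect to λ
  have e00 : ∀ lam : ℂ, lam ≠ 0 → deriv (fun l : ℂ => Xmat ε a u E p q l x 0 0) lam
      = -Complex.I + Complex.I * ε * u x / (2 * (x : ℂ) * lam ^ 2) := by
    intro lam hl
    have hfun : (fun l : ℂ => Xmat ε a u E p q l x 0 0)
        = fun l : ℂ => (-Complex.I * l + Complex.I * a / (2 * (x : ℂ)))
          + -(Complex.I * ε * u x / (2 * (x : ℂ))) * l⁻¹ := by
      funext l
      simp only [Xmat, Jmat, Kmat, sigma3, Matrix.sub_apply, Matrix.add_apply,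
        Matrix.smul_apply, smul_eq_mul, Matrix.of_apply, Matrix.cons_val', Matrix.cons_val_zero,
        Matrix.cons_val_one, Matrix.head_cons, Matrix.head_fin_const, Matrix.empty_val',
        Matrix.cons_val_fin_one]
      ring
    rw [hfun]
    exact (((((hasDerivAt_id lam).const_mul (-Complex.I)).add_const
        (Complex.I * a / (2 * (x : ℂ)))).add
      ((hasDerivAt_inv hl).const_mul (-(Complex.I * ε * u x / (2 * (x : ℂ)))))).deriv).trans
      (by field_simp <;> ring)
  have e11 : ∀ lam : ℂ, lam ≠ 0 → deriv (fun l : ℂ => Xmat ε a u E p q l x 1 1) lam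
      = Complex.I - Complex.I * ε * u x / (2 * (x : ℂ) * lam ^ 2) := by
    intro lam hl
    have hfun : (fun l : ℂ => Xmat ε a u E p q l x 1 1)
        = fun l : ℂ => (Complex.I * l + -(Complex.I * a / (2 * (x : ℂ))))
          + (Complex.I * ε * u x / (2 * (x : ℂ))) * l⁻¹ := by
      funext l
      simp only [Xmat, Jmat, Kmat, sigma3, Matrix.sub_apply, Matrix.add_apply,
        Matrix.smul_apply, smul_eq_mul, Matrix.of_apply, Matrix.cons_val', Matrix.cons_val_zero,
        Matrix.cons_val_one, Matrix.head_cons, Matrix.head_fin_const, Matrix.empty_val',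
        Matrix.cons_val_fin_one]
      ring
    rw [hfun]
    exact (((((hasDerivAt_id lam).const_mul Complex.I).add_const
        (-(Complex.I * a / (2 * (x : ℂ))))).add
      ((hasDerivAt_inv hl).const_mul (Complex.I * ε * u x / (2 * (x : ℂ))))).deriv).trans
      (by field_simp <;> ring)
  have e01 : ∀ lam : ℂ, lam ≠ 0 → deriv (fun l : ℂ => Xmat ε a u E p q l x 0 1) lam
      = Complex.I * u x * E x / (2 * (x : ℂ) * lam ^ 2) := by
    intro lam hl
    have hfun : (fun l : ℂ => Xmat ε a u E p q l x 0 1)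
        = fun l : ℂ => -(ε * (x : ℂ) * p x / (4 * u x))
          + -(Complex.I * u x * E x / (2 * (x : ℂ))) * l⁻¹ := by
      funext l
      simp only [Xmat, Jmat, Kmat, sigma3, Matrix.sub_apply, Matrix.add_apply,
        Matrix.smul_apply, smul_eq_mul, Matrix.of_apply, Matrix.cons_val', Matrix.cons_val_zero,
        Matrix.cons_val_one, Matrix.head_cons, Matrix.head_fin_const, Matrix.empty_val',
        Matrix.cons_val_fin_one]
      ring
    rw [hfun]
    exact ((((hasDerivAt_inv hl).const_mul
        (-(Complex.I * u x * E x / (2 * (x : ℂ))))).const_add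
        (-(ε * (x : ℂ) * p x / (4 * u x)))).deriv).trans (by field_simp <;> ring)
  have e10 : ∀ lam : ℂ, lam ≠ 0 → deriv (fun l : ℂ => Xmat ε a u E p q l x 1 0) lam
      = -(Complex.I * u x / (2 * (x : ℂ) * lam ^ 2)) * (E x)⁻¹ := by
    intro lam hl
    have hfun : (fun l : ℂ => Xmat ε a u E p q l x 1 0)
        = fun l : ℂ => -(ε * (x : ℂ) * q x / (4 * u x))
          + (Complex.I * u x * (E x)⁻¹ / (2 * (x : ℂ))) * l⁻¹ := by
      funext l
      simp only [Xmat, Jmat, Kmat, sigma3, Matrix.sub_apply, Matrix.add_apply,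
        Matrix.smul_apply, smul_eq_mul, Matrix.of_apply, Matrix.cons_val', Matrix.cons_val_zero,
        Matrix.cons_val_one, Matrix.head_cons, Matrix.head_fin_const, Matrix.empty_val',
        Matrix.cons_val_fin_one]
      ring
    rw [hfun]
    exact ((((hasDerivAt_inv hl).const_mul
        (Complex.I * u x * (E x)⁻¹ / (2 * (x : ℂ)))).const_add
        (-(ε * (x : ℂ) * q x / (4 * u x)))).deriv).trans (by field_simp <;> ring)
  have hI : Complex.I ≠ 0 := Complex.I_ne_zero
  have hI2 : Complex.I * Complex.I = -1 := Complex.I_mul_I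
  have hcx : (x:ℂ) * ((x:ℂ))⁻¹ = 1 := mul_inv_cancel₀ hx0
  have hcu : u x * (u x)⁻¹ = 1 := mul_inv_cancel₀ hux
  have hcE : E x * (E x)⁻¹ = 1 := mul_inv_cancel₀ hEx
  have rep1 : deriv u x - u x / (x : ℂ) - ((x : ℂ) / 2) * (p x / E x + q x * E x)
      = (2 * (x:ℂ) * E x * deriv u x - 2 * E x * u x - (x:ℂ)^2 * p x
          - (x:ℂ)^2 * q x * E x ^ 2) / (2 * (x:ℂ) * E x) := by
    linear_combination (-1 * E x * deriv u x * (E x)⁻¹ + (1/2) * (x:ℂ) * p x * (E x)⁻¹ + (1/2) * (x:ℂ) * E x^2 * q x * (E x)⁻¹) * hcx + (-1 * deriv u x + 1 * u x * ((x:ℂ))⁻¹ + (1/2) * (x:ℂ) * E x * q x) * hcE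
  have rep2 : -(ε * (x : ℂ) ^ 2 * deriv p x) / (4 * u x)
        + ε * (x : ℂ) ^ 2 * p x * deriv u x / (4 * (u x) ^ 2)
        - ε * (x : ℂ) * p x / (2 * u x)
        + Complex.I * ε * a * (x : ℂ) * p x / (2 * u x)
        - 2 * u x * E x
      = (ε * (x:ℂ)^2 * p x * deriv u x - ε * (x:ℂ)^2 * deriv p x * u x
          - 2 * ε * (x:ℂ) * p x * u x + 2 * Complex.I * ε * a * (x:ℂ) * p x * u x
          - 8 * u x ^ 3 * E x) / (4 * u x ^ 2) := by
    linear_combination (2 * u x * E x + 2 * u x^2 * E x * (u x)⁻¹ + (1/2) * (x:ℂ) * p x * ε * (u x)⁻¹ + (1/4) * (x:ℂ)^2 * deriv p x * ε * (u x)⁻¹ + (-1/2) * Complex.I * (x:ℂ) * p x * ε * a * (u x)⁻¹) * hcu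
  have rep3 : (Complex.I / 2) * u x * deriv E x + (Complex.I / 2) * deriv u x * E x
        - (Complex.I / (2 * (x : ℂ))) * u x * E x
        - (Complex.I * ε ^ 2 / 2) * (x : ℂ) * p x
      = (Complex.I * ((x:ℂ) * u x * deriv E x + (x:ℂ) * deriv u x * E x - u x * E x
          - ε^2 * (x:ℂ)^2 * p x)) / (2 * (x:ℂ)) := by
    linear_combination ((-1/2) * Complex.I * E x * deriv u x + (-1/2) * Complex.I * u x * deriv E x + (1/2) * Complex.I * (x:ℂ) * p x * ε^2) * hcx
  have rep4 : -(ε * (x : ℂ) ^ 2 * deriv q x) / (4 * u x)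
        + ε * (x : ℂ) ^ 2 * q x * deriv u x / (4 * (u x) ^ 2)
        - ε * (x : ℂ) * q x / (2 * u x)
        - Complex.I * ε * a * (x : ℂ) * q x / (2 * u x)
        - 2 * u x / E x
      = (ε * (x:ℂ)^2 * q x * deriv u x * E x - ε * (x:ℂ)^2 * deriv q x * u x * E x
          - 2 * ε * (x:ℂ) * q x * u x * E x - 2 * Complex.I * ε * a * (x:ℂ) * q x * u x * E x
          - 8 * u x ^ 3) / (4 * u x ^ 2 * E x) := by
    linear_combination (2 * u x * (E x)⁻¹ + 2 * u x^2 * (u x)⁻¹ * (E x)⁻¹ + (1/2) * (x:ℂ) * E x * q x * ε * (u x)⁻¹ * (E x)⁻¹ + (1/4) * (x:ℂ)^2 * E x * deriv q x * ε * (u x)⁻¹ * (E x)⁻¹ + (1/2) * Complex.I * (x:ℂ) * E x * q x * ε * a * (u x)⁻¹ * (E x)⁻¹) * hcu + ((1/2) * (x:ℂ) * q x * ε * (u x)⁻¹ + (1/4) * (x:ℂ)^2 * deriv q x * ε * (u x)⁻¹ + (-1/4) * (x:ℂ)^2 * q x * deriv u x * ε * (u x)⁻¹^2 + (1/2) * Complex.I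 * (x:ℂ) * q x * ε * a * (u x)⁻¹) * hcE
  have rep5 : (Complex.I / 2) * u x * deriv E x / (E x) ^ 2
        - (Complex.I / 2) * deriv u x / E x
        + (Complex.I / (2 * (x : ℂ))) * u x / E x
        + (Complex.I * ε ^ 2 / 2) * (x : ℂ) * q x
      = (Complex.I * ((x:ℂ) * u x * deriv E x - (x:ℂ) * deriv u x * E x + u x * E x
          + ε^2 * (x:ℂ)^2 * q x * E x ^ 2)) / (2 * (x:ℂ) * E x ^ 2) := by
    linear_combination ((1/2) * Complex.I * E x * deriv u x * (E x)⁻¹^2 + (-1/2) * Complex.I * u x * deriv E x * (E x)⁻¹^2 + (-1/2) * Complex.I * (x:ℂ) * E x^2 * q x * ε^2 * (E x)⁻¹^2) * hcx + ((1/2) * Complex.I * deriv u x * (E x)⁻¹ + (-1/2) * Complex.I * u x * ((x:ℂ))⁻¹ * (E x)⁻¹ + (-1/2) * Complex.I * (x:ℂ) * q x * ε^2 + (-1/2) * Complex.I * (x:ℂ) * E x * q x * ε^2 * (E x)⁻¹) * hcE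
  constructor
  · intro H
    have hA := H 1 one_ne_zero
    have hB := H (-1) (by norm_num)
    rw [← Matrix.ext_iff] at hA hB
    have z00 := hA 0 0
    have z01a := hA 0 1
    have z01b := hB 0 1
    have z10a := hA 1 0
    have z10b := hB 1 0
    simp only [Matrix.sub_apply, Matrix.add_apply, Matrix.of_apply, Matrix.mul_apply,
      Fin.sum_univ_two, Matrix.zero_apply] at z00 z01a z01b z10a z10b
    rw [d00 1 one_ne_zero, e00 1 one_ne_zero] at z00
    rw [d01 1 one_ne_zero, e01 1 one_ne_zero] at z01a
    rw [d01 (-1) (by norm_num), e01 (-1) (by norm_num)] at z01b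
    rw [d10 1 one_ne_zero, e10 1 one_ne_zero] at z10a
    rw [d10 (-1) (by norm_num), e10 (-1) (by norm_num)] at z10b
    simp only [LambdaMat, Xmat, Jmat, Kmat, sigma3, Matrix.sub_apply, Matrix.add_apply,
      Matrix.smul_apply, smul_eq_mul, Matrix.of_apply, Matrix.cons_val', Matrix.cons_val_zero,
      Matrix.cons_val_one, Matrix.head_cons, Matrix.head_fin_const, Matrix.empty_val',
      Matrix.cons_val_fin_one] at z00
    simp only [LambdaMat, Xmat, Jmat, Kmat, sigma3, Matrix.sub_apply, Matrix.add_apply,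
      Matrix.smul_apply, smul_eq_mul, Matrix.of_apply, Matrix.cons_val', Matrix.cons_val_zero,
      Matrix.cons_val_one, Matrix.head_cons, Matrix.head_fin_const, Matrix.empty_val',
      Matrix.cons_val_fin_one] at z01a
    simp only [LambdaMat, Xmat, Jmat, Kmat, sigma3, Matrix.sub_apply, Matrix.add_apply,
      Matrix.smul_apply, smul_eq_mul, Matrix.of_apply, Matrix.cons_val', Matrix.cons_val_zero,
      Matrix.cons_val_one, Matrix.head_cons, Matrix.head_fin_const, Matrix.empty_val',
      Matrix.cons_val_fin_one] at z01b
    simp only [LambdaMat, Xmat, Jmat, Kmat, sigma3, Matrix.sub_apply, Matrix.add_apply,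
      Matrix.smul_apply, smul_eq_mul, Matrix.of_apply, Matrix.cons_val', Matrix.cons_val_zero,
      Matrix.cons_val_one, Matrix.head_cons, Matrix.head_fin_const, Matrix.empty_val',
      Matrix.cons_val_fin_one] at z10a
    simp only [LambdaMat, Xmat, Jmat, Kmat, sigma3, Matrix.sub_apply, Matrix.add_apply,
      Matrix.smul_apply, smul_eq_mul, Matrix.of_apply, Matrix.cons_val', Matrix.cons_val_zero,
      Matrix.cons_val_one, Matrix.head_cons, Matrix.head_fin_const, Matrix.empty_val',
      Matrix.cons_val_fin_one] at z10b
    have hN2 : ε * (x:ℂ)^2 * p x * deriv u x - ε * (x:ℂ)^2 * deriv p x * u x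
        - 2 * ε * (x:ℂ) * p x * u x + 2 * Complex.I * ε * a * (x:ℂ) * p x * u x
        - 8 * u x ^ 3 * E x = 0 := by
      linear_combination (2 * u x^2) * z01a + (-2 * u x^2) * z01b + (-8 * (x:ℂ) * u x^3 * E x * ((x:ℂ))⁻¹) * hI2 + (8 * u x^3 * E x + -1 * Complex.I * (x:ℂ) * u x^2 * p x * ε * a * (u x)⁻¹) * hcx + (2 * (x:ℂ) * u x * p x * ε + 2 * (x:ℂ) * u x^2 * p x * ε * (u x)⁻¹ + -1 * (x:ℂ)^2 * p x * deriv u x * ε + 1 * (x:ℂ)^2 * u x * deriv p x * ε + -1 * (x:ℂ)^2 * u x * p x * deriv u x * ε * (u x)⁻¹ + 1 * (x:ℂ)^2 * u x^2 * deriv p x * ε * (u x)⁻¹ + -2 * Complex.I * (x:ℂ) * u x * p x * ε * a) * hcu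
    have hN3 : Complex.I * ((x:ℂ) * u x * deriv E x + (x:ℂ) * deriv u x * E x - u x * E x
        - ε^2 * (x:ℂ)^2 * p x) = 0 := by
      linear_combination (1 * (x:ℂ)) * z01a + (1 * (x:ℂ)) * z01b + (-1 * (x:ℂ) * u x * E x * a * ((x:ℂ))⁻¹ + 1 * (x:ℂ)^2 * u x * E x * a * ((x:ℂ))⁻¹^2) * hI2 + (-1 * (x:ℂ) * u x * E x * a * ((x:ℂ))⁻¹ + 1 * Complex.I * u x * E x + 1 * Complex.I * (x:ℂ)^2 * u x * p x * ε^2 * (u x)⁻¹) * hcx + (1 * Complex.I * (x:ℂ)^2 * p x * ε^2) * hcu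
    have hN4 : ε * (x:ℂ)^2 * q x * deriv u x * E x - ε * (x:ℂ)^2 * deriv q x * u x * E x
        - 2 * ε * (x:ℂ) * q x * u x * E x - 2 * Complex.I * ε * a * (x:ℂ) * q x * u x * E x
        - 8 * u x ^ 3 = 0 := by
      linear_combination (2 * u x^2 * E x) * z10a + (-2 * u x^2 * E x) * z10b + (-8 * (x:ℂ) * u x^3 * E x * ((x:ℂ))⁻¹ * (E x)⁻¹) * hI2 + (8 * u x^3 * E x * (E x)⁻¹ + 1 * Complex.I * (x:ℂ) * u x^2 * E x * q x * ε * a * (u x)⁻¹) * hcx + (2 * (x:ℂ) * u x * E x * q x * ε + 2 * (x:ℂ) * u x^2 * E x * q x * ε * (u x)⁻¹ + -1 * (x:ℂ)^2 * E x * q x * deriv u x * ε + 1 * (x:ℂ)^2 * u x * E x * deriv q x * ε + -1 * (x:ℂ)^2 * u x * E x * q x * deriv u x * ε * (u x)⁻¹ + 1 * (x:ℂ)^2 * u x^2 * E x * deriv q x * ε * (u x)⁻¹ + 2 * Complex.I * (x:ℂ) * u x * E x * q x * ε * a) * hcu + (8 * u x^3) * hcE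
    have hN5 : Complex.I * ((x:ℂ) * u x * deriv E x - (x:ℂ) * deriv u x * E x + u x * E x
        + ε^2 * (x:ℂ)^2 * q x * E x ^ 2) = 0 := by
      linear_combination (1 * (x:ℂ) * E x^2) * z10a + (1 * (x:ℂ) * E x^2) * z10b + (-1 * (x:ℂ) * u x * E x^2 * a * ((x:ℂ))⁻¹ * (E x)⁻¹ + 1 * (x:ℂ)^2 * u x * E x^2 * a * ((x:ℂ))⁻¹^2 * (E x)⁻¹) * hI2 + (-1 * (x:ℂ) * u x * E x^2 * a * ((x:ℂ))⁻¹ * (E x)⁻¹ + -1 * Complex.I * u x * E x^2 * (E x)⁻¹ + -1 * Complex.I * (x:ℂ)^2 * u x * E x^2 * q x * ε^2 * (u x)⁻¹) * hcx + (-1 * Complex.I * (x:ℂ)^2 * E x^2 * q x * ε^2) * hcu + (-1 * Complex.I * u x * E x + 1 * Complex.I * (x:ℂ) * E x * deriv u x + 1 * Complex.I * (x:ℂ) * E x^2 * deriv u x * (E x)⁻¹ + -1 * Complex.I * (x:ℂ) * u x * deriv E x + -1 * Complex.I * (x:ℂ) * u x * E x * deriv E x * (E x)⁻¹) * hcE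
    by_cases hε : ε = 0
    · exfalso
      rw [hε] at hN2
      have h8 : (8:ℂ) * u x ^ 3 * E x = 0 := by linear_combination (-1 : ℂ) * hN2
      exact (mul_ne_zero (mul_ne_zero (by norm_num) (pow_ne_zero 3 hux)) hEx) h8
    · have hN1 : 2 * (x:ℂ) * E x * deriv u x - 2 * E x * u x - (x:ℂ)^2 * p x
          - (x:ℂ)^2 * q x * E x ^ 2 = 0 := by
        have hh : ε * (2 * (x:ℂ) * E x * deriv u x - 2 * E x * u x - (x:ℂ)^2 * p x
            - (x:ℂ)^2 * q x * E x ^ 2) = 0 := by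
          linear_combination (-4 * Complex.I * (x:ℂ) * E x) * z00 + (2 * (x:ℂ) * E x * deriv u x * ε + -2 * (x:ℂ) * u x * E x * ε * ((x:ℂ))⁻¹ + -1 * (x:ℂ)^3 * u x * E x * p x * ε * ((x:ℂ))⁻¹ * (u x)⁻¹ * (E x)⁻¹ + -1 * (x:ℂ)^3 * u x * E x^2 * q x * ε * ((x:ℂ))⁻¹ * (u x)⁻¹) * hI2 + (2 * u x * E x * ε + 1 * (x:ℂ)^2 * u x * E x * p x * ε * (u x)⁻¹ * (E x)⁻¹ + 1 * (x:ℂ)^2 * u x * E x^2 * q x * ε * (u x)⁻¹) * hcx + (1 * (x:ℂ)^2 * E x * p x * ε * (E x)⁻¹ + 1 * (x:ℂ)^2 * E x^2 * q x * ε) * hcu + (1 * (x:ℂ)^2 * p x * ε) * hcE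
        exact (mul_eq_zero.mp hh).resolve_left hε
      refine ⟨?_, ?_, ?_, ?_, ?_⟩
      · rw [rep1, hN1, zero_div]
      · rw [rep2, hN2, zero_div]
      · rw [rep3, hN3, zero_div]
      · rw [rep4, hN4, zero_div]
      · rw [rep5, hN5, zero_div]
  · rintro ⟨h1, h2, h3, h4, h5⟩
    rw [rep1] at h1
    rw [rep2] at h2
    rw [rep3] at h3
    rw [rep4] at h4
    rw [rep5] at h5
    have hN1 : 2 * (x:ℂ) * E x * deriv u x - 2 * E x * u x - (x:ℂ)^2 * p x
        - (x:ℂ)^2 * q x * E x ^ 2 = 0 :=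
      (div_eq_zero_iff.mp h1).resolve_right
        (mul_ne_zero (mul_ne_zero two_ne_zero hx0) hEx)
    have hN2 : ε * (x:ℂ)^2 * p x * deriv u x - ε * (x:ℂ)^2 * deriv p x * u x
        - 2 * ε * (x:ℂ) * p x * u x + 2 * Complex.I * ε * a * (x:ℂ) * p x * u x
        - 8 * u x ^ 3 * E x = 0 :=
      (div_eq_zero_iff.mp h2).resolve_right
        (mul_ne_zero (by norm_num : (4:ℂ) ≠ 0) (pow_ne_zero 2 hux))
    have hN3 : Complex.I * ((x:ℂ) * u x * deriv E x + (x:ℂ) * deriv u x * E x - u x * E x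
        - ε^2 * (x:ℂ)^2 * p x) = 0 :=
      (div_eq_zero_iff.mp h3).resolve_right (mul_ne_zero two_ne_zero hx0)
    have hN4 : ε * (x:ℂ)^2 * q x * deriv u x * E x - ε * (x:ℂ)^2 * deriv q x * u x * E x
        - 2 * ε * (x:ℂ) * q x * u x * E x - 2 * Complex.I * ε * a * (x:ℂ) * q x * u x * E x
        - 8 * u x ^ 3 = 0 :=
      (div_eq_zero_iff.mp h4).resolve_right
        (mul_ne_zero (mul_ne_zero (by norm_num : (4:ℂ) ≠ 0) (pow_ne_zero 2 hux)) hEx)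
    have hN5 : Complex.I * ((x:ℂ) * u x * deriv E x - (x:ℂ) * deriv u x * E x + u x * E x
        + ε^2 * (x:ℂ)^2 * q x * E x ^ 2) = 0 :=
      (div_eq_zero_iff.mp h5).resolve_right
        (mul_ne_zero (mul_ne_zero two_ne_zero hx0) (pow_ne_zero 2 hEx))
    intro lam hl
    have hcl : lam * lam⁻¹ = 1 := mul_inv_cancel₀ hl
    rw [← Matrix.ext_iff]
    intro i j
    fin_cases i <;> fin_cases j
    · simp only [Fin.mk_zero, Fin.mk_one, Matrix.sub_apply, Matrix.add_apply, Matrix.of_apply,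
        Matrix.mul_apply, Fin.sum_univ_two, Matrix.zero_apply]
      rw [d00 lam hl, e00 lam hl]
      simp only [LambdaMat, Xmat, Jmat, Kmat, sigma3, Matrix.sub_apply, Matrix.add_apply,
        Matrix.smul_apply, smul_eq_mul, Matrix.of_apply, Matrix.cons_val', Matrix.cons_val_zero,
        Matrix.cons_val_one, Matrix.head_cons, Matrix.head_fin_const, Matrix.empty_val',
        Matrix.cons_val_fin_one]
      linear_combination ((1/4) * Complex.I * ε * ((x:ℂ))⁻¹ * (E x)⁻¹ * lam⁻¹^2) * hN1 + ((-1/2) * Complex.I * E x * deriv u x * ε * (E x)⁻¹ * lam⁻¹^2 + (1/4) * Complex.I * (x:ℂ) * p x * ε * (E x)⁻¹ * lam⁻¹^2 + (1/4) * Complex.I * (x:ℂ) * E x^2 * q x * ε * (E x)⁻¹ * lam⁻¹^2 + (-1/4) * Complex.I * (x:ℂ) * u x * p x * ε * (u x)⁻¹ * (E x)⁻¹ * lam⁻¹^2 + (-1/4) * Complex.I * (x:ℂ) * u x * E x * q x * ε * (u x)⁻¹ * lam⁻¹^2) * hcx + ((-1/4) * Complex.I * (x:ℂ) * p x * ε *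 (E x)⁻¹ * lam⁻¹^2 + (-1/4) * Complex.I * (x:ℂ) * E x * q x * ε * lam⁻¹^2) * hcu + ((-1/2) * Complex.I * deriv u x * ε * lam⁻¹^2 + (1/2) * Complex.I * u x * ε * ((x:ℂ))⁻¹ * lam⁻¹^2 + (1/4) * Complex.I * (x:ℂ) * E x * q x * ε * lam⁻¹^2) * hcE
    · simp only [Fin.mk_zero, Fin.mk_one, Matrix.sub_apply, Matrix.add_apply, Matrix.of_apply,
        Matrix.mul_apply, Fin.sum_univ_two, Matrix.zero_apply]
      rw [d01 lam hl, e01 lam hl]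
      simp only [LambdaMat, Xmat, Jmat, Kmat, sigma3, Matrix.sub_apply, Matrix.add_apply,
        Matrix.smul_apply, smul_eq_mul, Matrix.of_apply, Matrix.cons_val', Matrix.cons_val_zero,
        Matrix.cons_val_one, Matrix.head_cons, Matrix.head_fin_const, Matrix.empty_val',
        Matrix.cons_val_fin_one]
      linear_combination ((1/4) * (u x)⁻¹^2 * lam⁻¹) * hN2 + ((1/2) * ((x:ℂ))⁻¹ * lam⁻¹^2) * hN3 + ((1/2) * u x * E x * a * ((x:ℂ))⁻¹ * lam⁻¹^2 + 1 * (x:ℂ) * u x * E x * ((x:ℂ))⁻¹ * lam⁻¹ + 1 * (x:ℂ) * u x * E x * lam * ((x:ℂ))⁻¹ * lam⁻¹^2 + (-1/2) * (x:ℂ) * u x * E x * a * ((x:ℂ))⁻¹^2 * lam⁻¹^2) * hI2 + (-1 * u x * E x * lam⁻¹ + -1 * u x * E x * lam * lam⁻¹^2 + (1/2) * u x * E x * a * ((x:ℂ))⁻¹ * lam⁻¹^2 + (-1/2) * Complex.I * E x * deriv u x * lam⁻¹^2 + (-1/2) * Complex.I * u x * deriv E x * lam⁻¹^2 + (1/4)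 * Complex.I * (x:ℂ) * p x * ε * a * (u x)⁻¹ * lam⁻¹ + (1/2) * Complex.I * (x:ℂ) * p x * ε^2 * lam⁻¹^2 + (-1/2) * Complex.I * (x:ℂ) * u x * p x * ε^2 * (u x)⁻¹ * lam⁻¹^2) * hcx + (2 * u x * E x * lam⁻¹ + 2 * u x^2 * E x * (u x)⁻¹ * lam⁻¹ + (-1/2) * Complex.I * (x:ℂ) * p x * ε * a * (u x)⁻¹ * lam⁻¹ + (-1/2) * Complex.I * (x:ℂ) * p x * ε^2 * lam⁻¹^2) * hcu + (-1 * u x * E x * lam⁻¹ + (-1/2) * Complex.I * (x:ℂ)^2 * p x * ε * (u x)⁻¹) * hcl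
    · simp only [Fin.mk_zero, Fin.mk_one, Matrix.sub_apply, Matrix.add_apply, Matrix.of_apply,
        Matrix.mul_apply, Fin.sum_univ_two, Matrix.zero_apply]
      rw [d10 lam hl, e10 lam hl]
      simp only [LambdaMat, Xmat, Jmat, Kmat, sigma3, Matrix.sub_apply, Matrix.add_apply,
        Matrix.smul_apply, smul_eq_mul, Matrix.of_apply, Matrix.cons_val', Matrix.cons_val_zero,
        Matrix.cons_val_one, Matrix.head_cons, Matrix.head_fin_const, Matrix.empty_val',
        Matrix.cons_val_fin_one]
      linear_combination ((1/4) * (u x)⁻¹^2 * (E x)⁻¹ * lam⁻¹) * hN4 + ((1/2) * ((x:ℂ))⁻¹ * (E x)⁻¹^2 * lam⁻¹^2) * hN5 + ((1/2) * u x * a * ((x:ℂ))⁻¹ * (E x)⁻¹ * lam⁻¹^2 + 1 * (x:ℂ) * u x * ((x:ℂ))⁻¹ * (E x)⁻¹ * lam⁻¹ + 1 * (x:ℂ) * u x * lam * ((x:ℂ))⁻¹ * (E x)⁻¹ * lam⁻¹^2 + (-1/2) * (x:ℂ) * u x * a * ((x:ℂ))⁻¹^2 * (E x)⁻¹ * lam⁻¹^2)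 * hI2 + (-1 * u x * (E x)⁻¹ * lam⁻¹ + -1 * u x * lam * (E x)⁻¹ * lam⁻¹^2 + (1/2) * u x * a * ((x:ℂ))⁻¹ * (E x)⁻¹ * lam⁻¹^2 + (1/2) * Complex.I * E x * deriv u x * (E x)⁻¹^2 * lam⁻¹^2 + (-1/2) * Complex.I * u x * deriv E x * (E x)⁻¹^2 * lam⁻¹^2 + (-1/4) * Complex.I * (x:ℂ) * q x * ε * a * (u x)⁻¹ * lam⁻¹ + (-1/2) * Complex.I * (x:ℂ) * E x^2 * q x * ε^2 * (E x)⁻¹^2 * lam⁻¹^2 + (1/2) * Complex.I * (x:ℂ) * u x * q x * ε^2 * (u x)⁻¹ * lam⁻¹^2) * hcx + (2 * u x * (E x)⁻¹ * lam⁻¹ + 2 * u x^2 * (u x)⁻¹ * (E x)⁻¹ * lam⁻¹ + (-1/2) * (x:ℂ) * q x * ε * (u x)⁻¹ * lam⁻¹ + (1/2) * (x:ℂ) * E x * q x * ε * (u x)⁻¹ * (E x)⁻¹ * lam⁻¹ + (-1/4) * (x:ℂ)^2 * deriv q x * ε * (u x)⁻¹ * lam⁻¹ + (1/4) * (x:ℂ)^2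 * E x * deriv q x * ε * (u x)⁻¹ * (E x)⁻¹ * lam⁻¹ + (1/2) * Complex.I * (x:ℂ) * q x * ε^2 * lam⁻¹^2 + (1/2) * Complex.I * (x:ℂ) * E x * q x * ε * a * (u x)⁻¹ * (E x)⁻¹ * lam⁻¹) * hcu + ((1/2) * (x:ℂ) * q x * ε * (u x)⁻¹ * lam⁻¹ + (1/4) * (x:ℂ)^2 * deriv q x * ε * (u x)⁻¹ * lam⁻¹ + (-1/4) * (x:ℂ)^2 * q x * deriv u x * ε * (u x)⁻¹^2 * lam⁻¹ + (-1/2) * Complex.I * u x * ((x:ℂ))⁻¹ * (E x)⁻¹ * lam⁻¹^2 + (1/2) * Complex.I * (x:ℂ) * q x * ε * a * (u x)⁻¹ * lam⁻¹ + (-1/2) * Complex.I * (x:ℂ) * q x * ε^2 * lam⁻¹^2 + (-1/2) * Complex.I * (x:ℂ) * E x * q x * ε^2 * (E x)⁻¹ * lam⁻¹^2) * hcE + (-1 * u x * (E x)⁻¹ * lam⁻¹ + (1/2) * Complex.I * (x:ℂ)^2 * q x * ε * (u x)⁻¹) * hcl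
    · simp only [Fin.mk_zero, Fin.mk_one, Matrix.sub_apply, Matrix.add_apply, Matrix.of_apply,
        Matrix.mul_apply, Fin.sum_univ_two, Matrix.zero_apply]
      rw [d11 lam hl, e11 lam hl]
      simp only [LambdaMat, Xmat, Jmat, Kmat, sigma3, Matrix.sub_apply, Matrix.add_apply,
        Matrix.smul_apply, smul_eq_mul, Matrix.of_apply, Matrix.cons_val', Matrix.cons_val_zero,
        Matrix.cons_val_one, Matrix.head_cons, Matrix.head_fin_const, Matrix.empty_val',
        Matrix.cons_val_fin_one]
      linear_combination ((-1/4) * Complex.I * ε * ((x:ℂ))⁻¹ * (E x)⁻¹ * lam⁻¹^2) * hN1 + ((1/2) * Complex.I * E x * deriv u x * ε * (E x)⁻¹ * lam⁻¹^2 + (-1/4) * Complex.I * (x:ℂ) * p x * ε * (E x)⁻¹ * lam⁻¹^2 + (-1/4) * Complex.I * (x:ℂ) * E x^2 * q x * ε * (E x)⁻¹ * lam⁻¹^2 + (1/4) * Complex.I * (x:ℂ) * u x * p x * ε * (u x)⁻¹ * (E x)⁻¹ * lam⁻¹^2 + (1/4) * Complex.I * (x:ℂ) * u x * E x * q x * ε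 * (u x)⁻¹ * lam⁻¹^2) * hcx + ((1/4) * Complex.I * (x:ℂ) * p x * ε * (E x)⁻¹ * lam⁻¹^2 + (1/4) * Complex.I * (x:ℂ) * E x * q x * ε * lam⁻¹^2) * hcu + ((1/2) * Complex.I * deriv u x * ε * lam⁻¹^2 + (-1/2) * Complex.I * u x * ε * ((x:ℂ))⁻¹ * lam⁻¹^2 + (-1/4) * Complex.I * (x:ℂ) * E x * q x * ε * lam⁻¹^2) * hcE
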